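/- The class of Π₂ real numbers is closed under the following normal form: every α ∈ Π₂ ∩ [0,1] can be written as α = inf_i sup_j β_{i,j} for a computable double sequence of rationals (β_{i,j}) such that for each i the sequence j ↦ β_{i,j} is nondecreasing with limit α_i, and the sequence i ↦ α_i is nonincreasing with limit α. -/

import Mathlib

open Filter Topology

/-- A `Π₂` real number: `α = inf_i sup_j β_{i,j}` for a computable double sequence of
rationals, each row having bounded range. -/
def Pi2Real (α : ℝ) : Prop :=
  ∃ β : ℕ → ℕ → ℚ, Computable₂ β ∧
    (∀ i, BddAbove (Set.range fun j => (β i j : ℝ))) ∧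
    α = ⨅ i, ⨆ j, (β i j : ℝ)

namespace ZWAux

open Encodable Denumerable Primrec

/-! ### gcd is primrec -/

def gstep : ℕ × ℕ → ℕ × ℕ := fun p => if p.1 = 0 then p else (p.2 % p.1, p.1)

theorem gstep_iterate : ∀ (n a b : ℕ), a ≤ n → gstep^[n] (a, b) = (0, Nat.gcd a b) := by
  intro n
  induction n using Nat.strong_induction_on with
  | _ n IH =>
    intro a b ha
    match n with
    | 0 =>
      have : a = 0 := by omega
      subst this
      simp [gstep]
    | Nat.succ m =>
      rcases Nat.eq_zero_or_pos a with h0 | h0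
      · subst h0
        rw [Function.iterate_succ_apply]
        have : gstep (0, b) = (0, b) := by simp [gstep]
        rw [this, IH m (by omega) 0 b (by omega)]
      · rw [Function.iterate_succ_apply]
        have hg : gstep (a, b) = (b % a, a) := by
          simp [gstep]; omega
        have hmod : b % a < a := Nat.mod_lt b h0
        rw [hg, IH m (by omega) (b % a) a (by omega : b % a ≤ m)]
        rw [Nat.gcd_rec a b]

theorem gcd_eq_iterate (a b : ℕ) : Nat.gcd a b = (gstep^[a] (a, b)).2 := by
  rw [gstep_iterate a a b le_rfl]

theorem primrec_gstep : Primrec gstep := by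
  unfold gstep
  exact Primrec.ite (Primrec.eq.comp Primrec.fst (Primrec.const 0)) Primrec.id
    (Primrec.pair (Primrec.nat_mod.comp Primrec.snd Primrec.fst) Primrec.fst)

theorem primrec_gcd : Primrec₂ Nat.gcd := by
  have h : Primrec fun p : ℕ × ℕ => (gstep^[p.1] p).2 :=
    Primrec.snd.comp (Primrec.nat_iterate Primrec.fst Primrec.id (primrec_gstep.comp Primrec.snd).to₂)
  exact (h.of_eq fun p => by rw [← gcd_eq_iterate]).to₂

/-! ### validity predicate for codes of rationals -/

/-- decoded integer absolute value from an integer code -/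
def iabs (a : ℕ) : ℕ := a.div2 + a.bodd.toNat

theorem primrec_iabs : Primrec iabs :=
  Primrec.nat_add.comp Primrec.nat_div2
    ((Primrec.dom_bool Bool.toNat).comp Primrec.nat_bodd)


theorem bodd_div2_two_mul (n : ℕ) : (2 * n).bodd = false ∧ (2 * n).div2 = n := by
  have h := Nat.bodd_add_div2 (2 * n)
  rcases hb : (2 * n).bodd <;> rw [hb] at h <;> simp at h ⊢ <;> omega

theorem bodd_div2_two_mul_add_one (n : ℕ) :
    (2 * n + 1).bodd = true ∧ (2 * n + 1).div2 = n := by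
  have h := Nat.bodd_add_div2 (2 * n + 1)
  rcases hb : (2 * n + 1).bodd <;> rw [hb] at h <;> simp at h ⊢ <;> omega

def vd (k : ℕ) : Prop :=
  0 < k.unpair.2 ∧ Nat.gcd (iabs k.unpair.1) k.unpair.2 = 1

instance : DecidablePred vd := fun _ => instDecidableAnd

theorem primrec_vd : PrimrecPred vd := by
  have h1 : PrimrecPred fun k : ℕ => 0 < k.unpair.2 :=
    Primrec.nat_lt.comp (Primrec.const 0) (Primrec.snd.comp Primrec.unpair)
  have h2 : PrimrecPred fun k : ℕ => Nat.gcd (iabs k.unpair.1) k.unpair.2 = 1 :=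
    Primrec.eq.comp
      (primrec_gcd.comp (primrec_iabs.comp (Primrec.fst.comp Primrec.unpair))
        (Primrec.snd.comp Primrec.unpair)) (Primrec.const 1)
  exact h1.and h2

/-! ### encode formulas -/

theorem encode_rat (q : ℚ) :
    @Encodable.encode ℚ Rat.instEncodable q =
      Nat.pair (@Encodable.encode ℤ Int.encodable q.num) q.den := rfl

theorem encode_int_ofNat (n : ℕ) :
    @Encodable.encode ℤ Int.encodable (Int.ofNat n) = 2 * n := rfl

theorem encode_int_negSucc (n : ℕ) :
    @Encodable.encode ℤ Int.encodable (Int.negSucc n) = 2 * n + 1 := rfl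

theorem iabs_encode (z : ℤ) : iabs (@Encodable.encode ℤ Int.encodable z) = z.natAbs := by
  cases z with
  | ofNat n =>
    rw [encode_int_ofNat]
    unfold iabs
    rw [(bodd_div2_two_mul n).1, (bodd_div2_two_mul n).2]
    simp
  | negSucc n =>
    rw [encode_int_negSucc]
    unfold iabs
    rw [(bodd_div2_two_mul_add_one n).1, (bodd_div2_two_mul_add_one n).2]
    simp

theorem vd_iff_mem (k : ℕ) :
    vd k ↔ k ∈ Set.range (@Encodable.encode ℚ Rat.instEncodable) := by
  constructor
  · rintro ⟨h1, h2⟩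
    set a := k.unpair.1 with ha
    set b := k.unpair.2 with hb
    set z : ℤ := if a.bodd then Int.negSucc a.div2 else Int.ofNat a.div2 with hz
    have hzabs : z.natAbs = iabs a := by
      rcases hab : a.bodd
      · simp [hz, hab, iabs]
      · simp [hz, hab, iabs]
    refine ⟨Rat.mk' z b (by omega) (by rw [Nat.Coprime, hzabs]; exact h2), ?_⟩
    rw [encode_rat]
    have hnum : (Rat.mk' z b (by omega) (by rw [Nat.Coprime, hzabs]; exact h2)).num = z := rfl
    have hden : (Rat.mk' z b (by omega) (by rw [Nat.Coprime, hzabs]; exact h2)).den = b := rfl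
    rw [hnum, hden]
    have hez : @Encodable.encode ℤ Int.encodable z = a := by
      have hd2 := Nat.bodd_add_div2 a
      rcases hab : a.bodd
      · have hz' : z = Int.ofNat a.div2 := by rw [hz, hab]; rfl
        rw [hz', encode_int_ofNat]
        rw [hab] at hd2
        simp at hd2
        omega
      · have hz' : z = Int.negSucc a.div2 := by rw [hz, hab]; rfl
        rw [hz', encode_int_negSucc]
        rw [hab] at hd2
        simp at hd2
        omega
    rw [hez, ha, hb, Nat.pair_unpair]
  · rintro ⟨q, rfl⟩
    rw [encode_rat]
    constructor
    · rw [Nat.unpair_pair]; exact q.pos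
    · rw [Nat.unpair_pair]
      simp only [iabs_encode]
      exact q.reduced

/-! ### enumeration of valid codes -/

def Bnd (x : ℕ) : ℕ := (x + 1) * (x + 1) + (x + 1) + 1

theorem Bnd_eq_pair (x : ℕ) : Bnd x = Nat.pair (x + 1) 1 := by
  have : ¬ (x + 1 < 1) := by omega
  simp [Nat.pair, this, Bnd]

theorem vd_Bnd (x : ℕ) : vd (Bnd x) := by
  rw [Bnd_eq_pair]
  constructor
  · rw [Nat.unpair_pair]; omega
  · rw [Nat.unpair_pair]; exact Nat.gcd_one_right _

theorem lt_Bnd (x : ℕ) : x < Bnd x := by unfold Bnd; nlinarith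

theorem hex (x : ℕ) : ∃ y, x < y ∧ vd y := ⟨Bnd x, lt_Bnd x, vd_Bnd x⟩

def nextv (x : ℕ) : ℕ :=
  Bnd x - Nat.findGreatest (fun m => x < Bnd x - m ∧ vd (Bnd x - m)) (Bnd x)

theorem nextv_eq (x : ℕ) : nextv x = Nat.find (hex x) := by
  have hy₀spec := Nat.find_spec (hex x)
  have hy₀le : Nat.find (hex x) ≤ Bnd x := Nat.find_min' (hex x) ⟨lt_Bnd x, vd_Bnd x⟩
  have hQ : x < Bnd x - (Bnd x - Nat.find (hex x)) ∧ vd (Bnd x - (Bnd x - Nat.find (hex x))) := by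
    rw [Nat.sub_sub_self hy₀le]; exact hy₀spec
  have hle : Bnd x - Nat.find (hex x) ≤
      Nat.findGreatest (fun m => x < Bnd x - m ∧ vd (Bnd x - m)) (Bnd x) :=
    Nat.le_findGreatest (Nat.sub_le _ _) hQ
  have hspec := Nat.findGreatest_spec (P := fun m => x < Bnd x - m ∧ vd (Bnd x - m))
    (Nat.sub_le _ _) hQ
  have hnx : nextv x =
      Bnd x - Nat.findGreatest (fun m => x < Bnd x - m ∧ vd (Bnd x - m)) (Bnd x) := rfl
  have h1 : Nat.find (hex x) ≤ nextv x := by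
    apply Nat.find_min' (hex x)
    rw [hnx]
    exact hspec
  have h2 : nextv x ≤ Nat.find (hex x) := by
    rw [hnx]; omega
  omega

theorem nextv_lt (x : ℕ) : x < nextv x := by
  rw [nextv_eq]; exact (Nat.find_spec (hex x)).1

theorem nextv_vd (x : ℕ) : vd (nextv x) := by
  rw [nextv_eq]; exact (Nat.find_spec (hex x)).2

theorem nextv_min {x y : ℕ} (h1 : x < y) (h2 : vd y) : nextv x ≤ y := by
  rw [nextv_eq]; exact Nat.find_min' (hex x) ⟨h1, h2⟩

theorem primrec_Bnd : Primrec Bnd := by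
  unfold Bnd
  exact Primrec.nat_add.comp
    (Primrec.nat_add.comp (Primrec.nat_mul.comp Primrec.succ Primrec.succ) Primrec.succ)
    (Primrec.const 1)

theorem primrec_nextv : Primrec nextv := by
  have hp : PrimrecRel fun (x m : ℕ) => x < Bnd x - m ∧ vd (Bnd x - m) := by
    have hsub : Primrec fun p : ℕ × ℕ => Bnd p.1 - p.2 :=
      Primrec.nat_sub.comp (primrec_Bnd.comp Primrec.fst) Primrec.snd
    exact (Primrec.nat_lt.comp Primrec.fst hsub).and (primrec_vd.comp hsub)
  exact Primrec.nat_sub.comp primrec_Bnd (Primrec.nat_findGreatest primrec_Bnd hp)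

def nthv : ℕ → ℕ := fun n => Nat.rec (nextv 0) (fun _ ih => nextv ih) n

theorem primrec_nthv : Primrec nthv :=
  Primrec.nat_rec₁ (nextv 0) (primrec_nextv.comp Primrec.snd).to₂

end ZWAux

namespace ZWAux

/-! ### the bridge to `Denumerable.ofNat ℚ` -/

abbrev S : Set ℕ := Set.range (@Encodable.encode ℚ Rat.instEncodable)

noncomputable instance : DecidablePred (· ∈ S) := Encodable.decidableRangeEncode ℚ

instance : Infinite S :=
  Infinite.of_injective _ (Equiv.ofInjective _ Encodable.encode_injective).injective

theorem not_vd_zero : ¬ vd 0 := by decide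

theorem subtype_ofNat_val : ∀ n : ℕ, ((Nat.Subtype.ofNat S n : S) : ℕ) = nthv n := by
  intro n
  induction n with
  | zero =>
    show ((⊥ : S) : ℕ) = nextv 0
    have hmem : ((⊥ : S) : ℕ) ∈ S := (⊥ : S).2
    have h0 : ¬ ((0 : ℕ) ∈ S) := fun h => not_vd_zero ((vd_iff_mem 0).2 h)
    have hpos : 0 < ((⊥ : S) : ℕ) := by
      rcases Nat.eq_zero_or_pos ((⊥ : S) : ℕ) with h | h
      · exact absurd (h ▸ hmem) h0
      · exact h
    have h1 : nextv 0 ≤ ((⊥ : S) : ℕ) := nextv_min hpos ((vd_iff_mem _).2 hmem)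
    have h2 : ((⊥ : S) : ℕ) ≤ nextv 0 := by
      have : (⊥ : S) ≤ ⟨nextv 0, (vd_iff_mem _).1 (nextv_vd 0)⟩ := bot_le
      exact this
    omega
  | succ n ih =>
    have key : ∀ t : S, (t : ℕ) = nthv n →
        ((Nat.Subtype.succ t : S) : ℕ) = nextv (nthv n) := by
      intro t ht
      have hfs : (t : ℕ) + Nat.find (Nat.Subtype.exists_succ t) + 1 ∈ S :=
        Nat.find_spec (Nat.Subtype.exists_succ t)
      have h1 : nextv (nthv n) ≤ (t : ℕ) + Nat.find (Nat.Subtype.exists_succ t) + 1 :=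
        nextv_min (by omega) ((vd_iff_mem _).2 hfs)
      have hyv : nextv (nthv n) ∈ S := (vd_iff_mem _).1 (nextv_vd _)
      have hxy : (t : ℕ) < nextv (nthv n) := by rw [ht]; exact nextv_lt _
      have h2 : Nat.find (Nat.Subtype.exists_succ t) ≤ nextv (nthv n) - (t : ℕ) - 1 := by
        apply Nat.find_min'
        have he : (t : ℕ) + (nextv (nthv n) - (t : ℕ) - 1) + 1 = nextv (nthv n) := by omega
        rw [he]
        exact hyv
      have hsucc : ((Nat.Subtype.succ t : S) : ℕ) =
          (t : ℕ) + Nat.find (Nat.Subtype.exists_succ t) + 1 := rfl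
      omega
    exact key _ ih

theorem pcode_ofNat (n : ℕ) :
    @Encodable.encode ℚ Rat.instEncodable (Denumerable.ofNat ℚ n) = nthv n := by
  have h1 : Denumerable.ofNat ℚ n =
      (Encodable.equivRangeEncode ℚ).symm (Nat.Subtype.ofNat S n) := rfl
  rw [h1]
  have h2 := congrArg Subtype.val
    ((Encodable.equivRangeEncode ℚ).apply_symm_apply (Nat.Subtype.ofNat S n))
  have h3 : ((Encodable.equivRangeEncode ℚ)
      ((Encodable.equivRangeEncode ℚ).symm (Nat.Subtype.ofNat S n)) : ℕ) =
      @Encodable.encode ℚ Rat.instEncodable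
        ((Encodable.equivRangeEncode ℚ).symm (Nat.Subtype.ofNat S n)) := rfl
  rw [h3] at h2
  rw [h2]
  exact subtype_ofNat_val n

/-! ### comparison of rationals via codes -/

def leB (k l : ℕ) : Bool :=
  bif k.unpair.1.bodd then
    (bif l.unpair.1.bodd then
      decide ((l.unpair.1.div2 + 1) * k.unpair.2 ≤ (k.unpair.1.div2 + 1) * l.unpair.2)
    else true)
  else
    (bif l.unpair.1.bodd then false
    else decide (k.unpair.1.div2 * l.unpair.2 ≤ l.unpair.1.div2 * k.unpair.2))

theorem primrec_leB : Primrec₂ leB := by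
  have u1 : Primrec fun p : ℕ × ℕ => p.1.unpair.1 := Primrec.fst.comp (Primrec.unpair.comp Primrec.fst)
  have u2 : Primrec fun p : ℕ × ℕ => p.1.unpair.2 := Primrec.snd.comp (Primrec.unpair.comp Primrec.fst)
  have v1 : Primrec fun p : ℕ × ℕ => p.2.unpair.1 := Primrec.fst.comp (Primrec.unpair.comp Primrec.snd)
  have v2 : Primrec fun p : ℕ × ℕ => p.2.unpair.2 := Primrec.snd.comp (Primrec.unpair.comp Primrec.snd)
  have d1 : Primrec fun p : ℕ × ℕ =>
      decide ((p.2.unpair.1.div2 + 1) * p.1.unpair.2 ≤ (p.1.unpair.1.div2 + 1) * p.2.unpair.2) :=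
    PrimrecPred.decide <| Primrec.nat_le.comp
      (Primrec.nat_mul.comp (Primrec.succ.comp (Primrec.nat_div2.comp v1)) u2)
      (Primrec.nat_mul.comp (Primrec.succ.comp (Primrec.nat_div2.comp u1)) v2)
  have d2 : Primrec fun p : ℕ × ℕ =>
      decide (p.1.unpair.1.div2 * p.2.unpair.2 ≤ p.2.unpair.1.div2 * p.1.unpair.2) :=
    PrimrecPred.decide <| Primrec.nat_le.comp
      (Primrec.nat_mul.comp (Primrec.nat_div2.comp u1) v2)
      (Primrec.nat_mul.comp (Primrec.nat_div2.comp v1) u2)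
  exact (Primrec.cond (Primrec.nat_bodd.comp u1)
    (Primrec.cond (Primrec.nat_bodd.comp v1) d1 (Primrec.const true))
    (Primrec.cond (Primrec.nat_bodd.comp v1) (Primrec.const false) d2)).to₂

theorem leB_correct (x y : ℚ) :
    leB (@Encodable.encode ℚ Rat.instEncodable x) (@Encodable.encode ℚ Rat.instEncodable y) =
      decide (x ≤ y) := by
  rw [encode_rat, encode_rat]
  unfold leB
  rw [Nat.unpair_pair, Nat.unpair_pair]
  have hxd : (0 : ℤ) < (x.den : ℤ) := by exact_mod_cast x.pos
  have hyd : (0 : ℤ) < (y.den : ℤ) := by exact_mod_cast y.pos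
  have hparity : ∀ n : ℕ, (2 * n).bodd = false ∧ (2 * n).div2 = n := by
    intro n
    have h := Nat.bodd_add_div2 (2 * n)
    rcases hb : (2 * n).bodd <;> rw [hb] at h <;> simp at h ⊢ <;> omega
  have hparity1 : ∀ n : ℕ, (2 * n + 1).bodd = true ∧ (2 * n + 1).div2 = n := by
    intro n
    have h := Nat.bodd_add_div2 (2 * n + 1)
    rcases hb : (2 * n + 1).bodd <;> rw [hb] at h <;> simp at h ⊢ <;> omega
  rcases hn : x.num with n | n <;> rcases hm : y.num with m | m
  · rw [encode_int_ofNat, encode_int_ofNat, (hparity n).1, (hparity m).1,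
      (hparity n).2, (hparity m).2]
    simp only [cond_false]
    rw [decide_eq_decide]
    rw [Rat.le_iff, hn, hm]
    simp only [Int.ofNat_eq_natCast]
    constructor <;> intro h <;> exact_mod_cast h
  · rw [encode_int_ofNat, encode_int_negSucc, (hparity n).1, (hparity1 m).1]
    simp only [cond_false, cond_true]
    symm
    rw [decide_eq_false_iff_not, Rat.le_iff, hn, hm]
    intro h
    have h1 : (0 : ℤ) ≤ (n : ℤ) * y.den := by positivity
    rw [Int.ofNat_eq_natCast] at h
    have h2 : Int.negSucc m * x.den < 0 := by
      rw [Int.negSucc_eq]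
      exact mul_neg_of_neg_of_pos (by omega) hxd
    omega
  · rw [encode_int_negSucc, encode_int_ofNat, (hparity1 n).1, (hparity m).1]
    simp only [cond_false, cond_true]
    symm
    rw [decide_eq_true_iff, Rat.le_iff, hn, hm]
    simp only [Int.ofNat_eq_natCast]
    have h1 : (0 : ℤ) ≤ (m : ℤ) * x.den := by positivity
    have h2 : Int.negSucc n * y.den < 0 := by
      rw [Int.negSucc_eq]
      exact mul_neg_of_neg_of_pos (by omega) hyd
    omega
  · rw [encode_int_negSucc, encode_int_negSucc, (hparity1 n).1, (hparity1 m).1,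
      (hparity1 n).2, (hparity1 m).2]
    simp only [cond_true]
    rw [decide_eq_decide]
    rw [Rat.le_iff, hn, hm, Int.negSucc_eq, Int.negSucc_eq, neg_mul, neg_mul,
      neg_le_neg_iff]
    constructor <;> intro h <;> exact_mod_cast h

theorem primrec_rat_le : PrimrecRel ((· ≤ ·) : ℚ → ℚ → Prop) := by
  have h1 : Primrec₂ fun m n : ℕ => leB (nthv m) (nthv n) :=
    (primrec_leB.comp (primrec_nthv.comp Primrec.fst) (primrec_nthv.comp Primrec.snd)).to₂
  have h2 : Primrec₂ fun m n : ℕ =>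
      decide (Denumerable.ofNat ℚ m ≤ Denumerable.ofNat ℚ n) := by
    refine h1.of_eq fun m n => ?_
    rw [← pcode_ofNat m, ← pcode_ofNat n, leB_correct]
  exact Primrec₂.primrecRel (Primrec₂.ofNat_iff (f := fun a b : ℚ => decide (a ≤ b)) |>.2 h2)

theorem primrec_rat_max : Primrec₂ (max : ℚ → ℚ → ℚ) := by
  have h : Primrec fun p : ℚ × ℚ => if p.1 ≤ p.2 then p.2 else p.1 :=
    Primrec.ite (primrec_rat_le.comp Primrec.fst Primrec.snd) Primrec.snd Primrec.fst
  exact (h.of_eq fun p => (max_def p.1 p.2).symm).to₂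

theorem primrec_rat_min : Primrec₂ (min : ℚ → ℚ → ℚ) := by
  have h : Primrec fun p : ℚ × ℚ => if p.1 ≤ p.2 then p.1 else p.2 :=
    Primrec.ite (primrec_rat_le.comp Primrec.fst Primrec.snd) Primrec.fst Primrec.snd
  exact (h.of_eq fun p => (min_def p.1 p.2).symm).to₂

end ZWAux

namespace ZWAux

variable (β : ℕ → ℕ → ℚ)

def rmax (i j : ℕ) : ℚ := Nat.rec (β i 0) (fun j' ih => max ih (β i (j' + 1))) j

def cmin (i j : ℕ) : ℚ := Nat.rec (rmax β 0 j) (fun i' ih => min ih (rmax β (i' + 1) j)) i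

def nf (i j : ℕ) : ℚ := max 0 (cmin β i j)

theorem rmax_zero (i : ℕ) : rmax β i 0 = β i 0 := rfl
theorem rmax_succ (i j : ℕ) : rmax β i (j + 1) = max (rmax β i j) (β i (j + 1)) := rfl
theorem cmin_zero (j : ℕ) : cmin β 0 j = rmax β 0 j := rfl
theorem cmin_succ (i j : ℕ) : cmin β (i + 1) j = min (cmin β i j) (rmax β (i + 1) j) := rfl

theorem computable_rmax (hβ : Computable₂ β) : Computable₂ (rmax β) := by
  have h := Computable.nat_rec (f := fun p : ℕ × ℕ => p.2) (g := fun p : ℕ × ℕ => β p.1 0)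
    (h := fun (p : ℕ × ℕ) (q : ℕ × ℚ) => max q.2 (β p.1 (q.1 + 1)))
    Computable.snd
    (hβ.comp Computable.fst (Computable.const 0))
    ((primrec_rat_max.to_comp.comp (Computable.snd.comp Computable.snd)
      (hβ.comp (Computable.fst.comp Computable.fst)
        (Computable.succ.comp (Computable.fst.comp Computable.snd)))).to₂)
  exact (h.of_eq fun p => rfl).to₂

theorem computable_cmin (hβ : Computable₂ β) : Computable₂ (cmin β) := by
  have hrm := computable_rmax β hβ
  have h := Computable.nat_rec (f := fun p : ℕ × ℕ => p.1)
    (g := fun p : ℕ × ℕ => rmax β 0 p.2)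
    (h := fun (p : ℕ × ℕ) (q : ℕ × ℚ) => min q.2 (rmax β (q.1 + 1) p.2))
    Computable.fst
    (hrm.comp (Computable.const 0) Computable.snd)
    ((primrec_rat_min.to_comp.comp (Computable.snd.comp Computable.snd)
      (hrm.comp (Computable.succ.comp (Computable.fst.comp Computable.snd))
        (Computable.snd.comp Computable.fst))).to₂)
  exact (h.of_eq fun p => rfl).to₂

theorem computable_nf (hβ : Computable₂ β) : Computable₂ (nf β) := by
  have hcm := computable_cmin β hβ
  exact ((primrec_rat_max.to_comp.comp (Computable.const 0)
    (hcm.comp Computable.fst Computable.snd)).of_eq fun p => rfl).to₂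

theorem rmax_mono (i : ℕ) : Monotone (rmax β i) :=
  monotone_nat_of_le_succ fun j => le_max_left _ _

theorem cmin_mono (i : ℕ) : Monotone (cmin β i) := by
  induction i with
  | zero => exact rmax_mono β 0
  | succ i ih =>
    have : cmin β (i + 1) = fun j => min (cmin β i j) (rmax β (i + 1) j) := rfl
    rw [this]
    exact ih.min (rmax_mono β (i + 1))

theorem nf_mono (i : ℕ) : Monotone (nf β i) := by
  have : nf β i = fun j => max 0 (cmin β i j) := rfl
  rw [this]
  exact monotone_const.max (cmin_mono β i)

theorem beta_le_rmax (i j : ℕ) : β i j ≤ rmax β i j := by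
  cases j with
  | zero => exact le_rfl
  | succ j => exact le_max_right _ _

end ZWAux

open ZWAux in
/-- Zheng–Weihrauch normal form: every `α ∈ Π₂ ∩ [0,1]` can be written as
`α = inf_i sup_j β_{i,j}` with `β` computable, each row `j ↦ β_{i,j}` nondecreasing with
limit `α_i`, and `i ↦ α_i` nonincreasing with limit `α`. -/
theorem pi2_monotone_normal_form (α : ℝ) (hα : Pi2Real α) (h0 : 0 ≤ α) (h1 : α ≤ 1) :
    ∃ β : ℕ → ℕ → ℚ, Computable₂ β ∧
      (∀ i, Monotone (β i)) ∧
      ∃ a : ℕ → ℝ,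
        (∀ i, Tendsto (fun j => (β i j : ℝ)) atTop (nhds (a i))) ∧
        Antitone a ∧ Tendsto a atTop (nhds α) ∧
        α = ⨅ i, ⨆ j, (β i j : ℝ) := by
  obtain ⟨β, hβ, hbdd, hval⟩ := hα
  set A : ℕ → ℝ := fun i => ⨆ j, (β i j : ℝ) with hA
  set L : ℕ → ℝ := fun i => Nat.rec (A 0) (fun i' ih => min ih (A (i' + 1))) i with hL
  set a : ℕ → ℝ := fun i => max 0 (L i) with ha
  have hL_zero : L 0 = A 0 := rfl
  have hL_succ : ∀ i, L (i + 1) = min (L i) (A (i + 1)) := fun i => rfl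
  -- rmax facts over ℝ
  have hrm_le : ∀ i j, ((rmax β i j : ℚ) : ℝ) ≤ A i := by
    intro i j
    induction j with
    | zero => exact le_ciSup (hbdd i) 0
    | succ j ihj =>
      rw [rmax_succ, Rat.cast_max]
      exact max_le ihj (le_ciSup (hbdd i) (j + 1))
  have hrm_monoR : ∀ i, Monotone fun j => ((rmax β i j : ℚ) : ℝ) :=
    fun i x y h => Rat.cast_le.2 (rmax_mono β i h)
  have hrm_tendsto : ∀ i, Tendsto (fun j => ((rmax β i j : ℚ) : ℝ)) atTop (nhds (A i)) := by
    intro i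
    have hb2 : BddAbove (Set.range fun j => ((rmax β i j : ℚ) : ℝ)) := by
      refine ⟨A i, ?_⟩
      rintro _ ⟨j, rfl⟩
      exact hrm_le i j
    have ht := tendsto_atTop_ciSup (hrm_monoR i) hb2
    have heq : (⨆ j, ((rmax β i j : ℚ) : ℝ)) = A i := by
      refine le_antisymm (ciSup_le (hrm_le i)) (ciSup_le fun j => ?_)
      exact le_trans (Rat.cast_le.2 (beta_le_rmax β i j)) (le_ciSup hb2 j)
    rwa [heq] at ht
  -- cmin tendsto
  have hcm_tendsto : ∀ i, Tendsto (fun j => ((cmin β i j : ℚ) : ℝ)) atTop (nhds (L i)) := by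
    intro i
    induction i with
    | zero => exact hrm_tendsto 0
    | succ i ih =>
      have : (fun j => ((cmin β (i + 1) j : ℚ) : ℝ)) =
          fun j => min ((cmin β i j : ℚ) : ℝ) ((rmax β (i + 1) j : ℚ) : ℝ) := by
        funext j
        rw [cmin_succ, Rat.cast_min]
      rw [this, hL_succ]
      exact ih.min (hrm_tendsto (i + 1))
  -- nf tendsto
  have hnf_tendsto : ∀ i, Tendsto (fun j => ((nf β i j : ℚ) : ℝ)) atTop (nhds (a i)) := by
    intro i
    have : (fun j => ((nf β i j : ℚ) : ℝ)) =
        fun j => max (0 : ℝ) ((cmin β i j : ℚ) : ℝ) := by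
      funext j
      show ((max 0 (cmin β i j) : ℚ) : ℝ) = _
      rw [Rat.cast_max, Rat.cast_zero]
    rw [this, ha]
    exact tendsto_const_nhds.max (hcm_tendsto i)
  -- L facts
  have hL_le_A : ∀ i, L i ≤ A i := by
    intro i
    cases i with
    | zero => exact le_rfl
    | succ i => rw [hL_succ]; exact min_le_right _ _
  have hL_anti : Antitone L := by
    apply antitone_nat_of_succ_le
    intro i
    rw [hL_succ]
    exact min_le_left _ _
  have ha_anti : Antitone a := fun i k h => max_le_max le_rfl (hL_anti h)
  have hαA : α = ⨅ i, A i := hval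
  -- α ≤ a i
  have hαle : ∀ i, α ≤ a i := by
    by_cases hbb : BddBelow (Set.range A)
    · have hle1 : ∀ i', α ≤ A i' := by
        intro i'
        rw [hαA]
        exact ciInf_le hbb i'
      have hle2 : ∀ i, α ≤ L i := by
        intro i
        induction i with
        | zero => exact hle1 0
        | succ i ih => rw [hL_succ]; exact le_min ih (hle1 (i + 1))
      exact fun i => (hle2 i).trans (le_max_right _ _)
    · have hzero : α = 0 := by rw [hαA]; exact Real.iInf_of_not_bddBelow hbb
      rw [hzero]
      exact fun i => le_max_left _ _
  have hexists : ∀ ε : ℝ, 0 < ε → ∃ i, A i < α + ε := by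
    intro ε hε
    apply exists_lt_of_ciInf_lt
    rw [← hαA]
    linarith
  -- inf of a is α
  have hbb_a : BddBelow (Set.range a) := by
    refine ⟨α, ?_⟩
    rintro _ ⟨i, rfl⟩
    exact hαle i
  have hinf_a : (⨅ i, a i) = α := by
    refine le_antisymm ?_ (le_ciInf hαle)
    apply le_of_forall_pos_le_add
    intro ε hε
    obtain ⟨i, hi⟩ := hexists ε hε
    calc (⨅ i, a i) ≤ a i := ciInf_le hbb_a i
      _ ≤ max 0 (A i) := max_le_max le_rfl (hL_le_A i)
      _ ≤ α + ε := max_le (by linarith) hi.le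
  have hta : Tendsto a atTop (nhds α) := by
    have ht := tendsto_atTop_ciInf ha_anti hbb_a
    rwa [hinf_a] at ht
  -- sup of rows
  have hsup_eq : ∀ i, (⨆ j, ((nf β i j : ℚ) : ℝ)) = a i := by
    intro i
    have hmonoR : Monotone fun j => ((nf β i j : ℚ) : ℝ) :=
      fun x y h => Rat.cast_le.2 (nf_mono β i h)
    have hub : ∀ j, ((nf β i j : ℚ) : ℝ) ≤ a i := fun j =>
      hmonoR.ge_of_tendsto (hnf_tendsto i) j
    have hb2 : BddAbove (Set.range fun j => ((nf β i j : ℚ) : ℝ)) := by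
      refine ⟨a i, ?_⟩
      rintro _ ⟨j, rfl⟩
      exact hub j
    exact tendsto_nhds_unique (tendsto_atTop_ciSup hmonoR hb2) (hnf_tendsto i)
  refine ⟨nf β, computable_nf β hβ, nf_mono β, a, hnf_tendsto, ha_anti, hta, ?_⟩
  rw [iInf_congr hsup_eq, hinf_a]
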